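/- arXiv:1809.09579 — 3 statements merged into one kernel-verified Lean document; each statement's English description precedes it below -/
import Mathlib

section
/- Let M ≥ 1 and x ≥ 2 be integers, let a be coprime to M, and let U ≥ 1. Suppose that for every prime p ≤ x with p ∤ M a residue class a_p (mod p) is given such that every integer n ∈ [1, U] satisfies n ≡ a_p (mod p) for some such prime p. Let r be an integer with M·r ≡ −1 (mod P_M(x)). Then there exists an integer U₀ with x/M ≤ U₀ ≤ x/M + P_M(x) such that for every integer j with 1 ≤ j ≤ U, the number M·(U₀ + a·r + j) + a is divisible by some prime p ≤ x with p ∤ M. In particular, every such number that exceeds x is composite, so the arithmetic progression a (mod M) contains U consecutive terms, all exceeding x, that are all composite. -/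
open scoped Classical

/-- `P_M(t) = ∏_{p ≤ t, p ∤ M} p`, the product of the primes up to `t` not dividing `M`. -/
noncomputable def PM (M : ℕ) (t : ℝ) : ℕ :=
  ∏ p ∈ (Finset.range (⌊t⌋₊ + 1)).filter (fun p => p.Prime ∧ ¬ p ∣ M), p

/-- CRT over a finset of primes, integer version. -/
lemma crt_primes (S : Finset ℕ) (hS : ∀ q ∈ S, q.Prime) (f : ℕ → ℤ) :
    ∃ v : ℤ, ∀ q ∈ S, (q : ℤ) ∣ v - f q := by
  classical
  induction S using Finset.induction with
  | empty => exact ⟨0, by simp⟩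
  | @insert p S hpS ih =>
    obtain ⟨v', hv'⟩ := ih (fun q hq => hS q (Finset.mem_insert_of_mem hq))
    have hp : p.Prime := hS p (Finset.mem_insert_self p S)
    set Q : ℤ := ∏ q ∈ S, (q : ℤ) with hQ
    have hQcast : Q = ((∏ q ∈ S, q : ℕ) : ℤ) := by rw [hQ]; push_cast; rfl
    have hcopN : Nat.Coprime p (∏ q ∈ S, q) := by
      refine Nat.Coprime.prod_right (fun q hqS => ?_)
      have hq : q.Prime := hS q (Finset.mem_insert_of_mem hqS)
      rw [Nat.coprime_primes hp hq]
      exact fun h => hpS (h ▸ hqS)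
    have hcop : IsCoprime (p : ℤ) Q := by
      rw [hQcast]
      exact Nat.isCoprime_iff_coprime.mpr hcopN
    obtain ⟨u, w, huw⟩ := hcop
    refine ⟨v' + w * Q * (f p - v'), fun q hq => ?_⟩
    rcases Finset.mem_insert.mp hq with rfl | hqS
    · have : v' + w * Q * (f q - v') - f q = (v' - f q) * (u * (q : ℤ)) := by
        linear_combination (f q - v') * huw
      rw [this]
      exact Dvd.dvd.mul_left (dvd_mul_left _ _) _
    · have hqQ : (q : ℤ) ∣ Q := Finset.dvd_prod_of_mem _ hqS
      have : v' + w * Q * (f p - v') - f q = (v' - f q) + (w * (f p - v')) * Q := by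
        ring
      rw [this]
      exact dvd_add (hv' q hqS) (Dvd.dvd.mul_left hqQ _)

/-- If the primes `p ≤ x`, `p ∤ M` sieve out `[1, U]` via residue classes
`a_p (mod p)`, and `M·r ≡ −1 (mod P_M(x))`, then there is an integer `U₀` with
`x/M ≤ U₀ ≤ x/M + P_M(x)` such that for every `1 ≤ j ≤ U` the number
`M·(U₀ + a·r + j) + a` is divisible by some prime `p ≤ x` with `p ∤ M`. -/
theorem stmt2 (M x : ℕ) (hM : 1 ≤ M) (hx : 2 ≤ x) (a : ℕ) (ha : Nat.Coprime a M)
    (U : ℕ) (hU : 1 ≤ U) (ap : ℕ → ℕ)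
    (hsieve : ∀ n : ℕ, 1 ≤ n → n ≤ U →
      ∃ p : ℕ, p.Prime ∧ p ≤ x ∧ ¬ p ∣ M ∧ n % p = ap p % p)
    (r : ℤ) (hr : (M : ℤ) * r ≡ -1 [ZMOD (PM M (x : ℝ) : ℤ)]) :
    ∃ U₀ : ℤ, (x : ℝ) / (M : ℝ) ≤ (U₀ : ℝ) ∧
      (U₀ : ℝ) ≤ (x : ℝ) / (M : ℝ) + (PM M (x : ℝ) : ℝ) ∧
      ∀ j : ℕ, 1 ≤ j → j ≤ U →
        ∃ p : ℕ, p.Prime ∧ p ≤ x ∧ ¬ p ∣ M ∧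
          (p : ℤ) ∣ (M : ℤ) * (U₀ + (a : ℤ) * r + (j : ℤ)) + (a : ℤ) := by
  classical
  set S : Finset ℕ := (Finset.range (⌊(x : ℝ)⌋₊ + 1)).filter (fun p => p.Prime ∧ ¬ p ∣ M)
    with hSdef
  have hSprime : ∀ q ∈ S, q.Prime := fun q hq => ((Finset.mem_filter.mp hq).2).1
  set P : ℕ := PM M (x : ℝ) with hPdef
  have hPS : P = ∏ p ∈ S, p := rfl
  have hPpos : 0 < P := by
    rw [hPS]
    exact Finset.prod_pos (fun p hp => (hSprime p hp).pos)
  have hPposR : (0 : ℝ) < (P : ℝ) := by exact_mod_cast hPpos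
  obtain ⟨v, hv⟩ := crt_primes S hSprime (fun p => -(ap p : ℤ))
  set k : ℤ := ⌈(((x : ℝ) / (M : ℝ)) - (v : ℝ)) / (P : ℝ)⌉ with hk
  refine ⟨v + (P : ℤ) * k, ?_, ?_, ?_⟩
  · have h1 : (((x : ℝ) / (M : ℝ)) - (v : ℝ)) / (P : ℝ) ≤ (k : ℝ) := Int.le_ceil _
    have := (div_le_iff₀ hPposR).mp h1
    push_cast
    linarith
  · have h1 : (k : ℝ) < (((x : ℝ) / (M : ℝ)) - (v : ℝ)) / (P : ℝ) + 1 := Int.ceil_lt_add_one _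
    have hd : (P : ℝ) * ((((x : ℝ) / (M : ℝ)) - (v : ℝ)) / (P : ℝ)) =
        ((x : ℝ) / (M : ℝ)) - (v : ℝ) := mul_div_cancel₀ _ (ne_of_gt hPposR)
    push_cast
    nlinarith [h1, hPposR, hd]
  · intro j hj1 hjU
    obtain ⟨p, hp, hpx, hpM, hmod⟩ := hsieve j hj1 hjU
    have hpS : p ∈ S := by
      rw [hSdef, Finset.mem_filter, Finset.mem_range]
      refine ⟨?_, hp, hpM⟩
      have : ⌊(x : ℝ)⌋₊ = x := Nat.floor_natCast x
      omega
    refine ⟨p, hp, hpx, hpM, ?_⟩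
    have hpP : (p : ℤ) ∣ (P : ℤ) := by
      exact_mod_cast Int.ofNat_dvd.mpr (hPS ▸ Finset.dvd_prod_of_mem _ hpS)
    -- p ∣ M*r + 1
    have hMr : (p : ℤ) ∣ (M : ℤ) * r + 1 := by
      have : (P : ℤ) ∣ (M : ℤ) * r - (-1) := Int.ModEq.dvd hr.symm
      have h2 : (P : ℤ) ∣ (M : ℤ) * r + 1 := by simpa [sub_neg_eq_add] using this
      exact dvd_trans hpP h2
    -- p ∣ v + ap p
    have hvp : (p : ℤ) ∣ v + (ap p : ℤ) := by
      have := hv p hpS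
      simpa [sub_neg_eq_add] using this
    -- p ∣ j - ap p
    have hjap : (p : ℤ) ∣ (ap p : ℤ) - (j : ℤ) := (Nat.ModEq.dvd hmod)
    have key : (M : ℤ) * ((v + (P : ℤ) * k) + (a : ℤ) * r + (j : ℤ)) + (a : ℤ) =
        (M : ℤ) * (v + (ap p : ℤ)) + (a : ℤ) * ((M : ℤ) * r + 1)
          - (M : ℤ) * ((ap p : ℤ) - (j : ℤ)) + ((M : ℤ) * k) * (P : ℤ) := by
      ring
    rw [key]
    exact dvd_add (dvd_sub (dvd_add (hvp.mul_left _) (hMr.mul_left _)) (hjap.mul_left _))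
      (Dvd.dvd.mul_left hpP _)
end

section
/- Let Q be a finite set of primes, R a finite set of integers, and for each q ∈ Q let μ_q : ℤ/qℤ → [0,1] be a probability mass function (so ∑_{a mod q} μ_q(a) = 1). Let L ≥ 0 and suppose that ∑_{q ∈ Q} μ_q(p₀ mod q) ≥ L for every p₀ ∈ R. Then there exists a choice of residues a_q ∈ ℤ/qℤ, one for each q ∈ Q, such that #{p₀ ∈ R : p₀ ≢ a_q (mod q) for every q ∈ Q} ≤ e^{−L}·|R|. -/
open scoped Classical

lemma stmt15_exists_le_weighted {ι : Type*} (s : Finset ι) (hs : s.Nonempty)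
    (w g : ι → ℝ) (hw : ∀ i ∈ s, 0 ≤ w i) (hws : ∑ i ∈ s, w i = 1) :
    ∃ i ∈ s, g i ≤ ∑ j ∈ s, w j * g j := by
  obtain ⟨i, hi, hmin⟩ := s.exists_min_image g hs
  refine ⟨i, hi, ?_⟩
  calc g i = ∑ j ∈ s, w j * g i := by rw [← Finset.sum_mul, hws, one_mul]
    _ ≤ ∑ j ∈ s, w j * g j :=
      Finset.sum_le_sum fun j hj => mul_le_mul_of_nonneg_left (hmin j hj) (hw j hj)

lemma stmt15_aux (μ : ℕ → ℕ → ℝ) (Q : Finset ℕ) (hQ : ∀ q ∈ Q, 0 < q)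
    (hμ0 : ∀ q ∈ Q, ∀ a : ℕ, 0 ≤ μ q a)
    (hμsum : ∀ q ∈ Q, ∑ a ∈ Finset.range q, μ q a = 1)
    (R : Finset ℕ) :
    ∃ a : ℕ → ℕ,
      ((R.filter (fun p₀ : ℕ => ∀ q ∈ Q, p₀ % q ≠ a q % q)).card : ℝ)
        ≤ ∑ p ∈ R, Real.exp (-∑ q ∈ Q, μ q (p % q)) := by
  induction Q using Finset.induction_on generalizing R with
  | empty => exact ⟨fun _ => 0, by simp⟩
  | @insert q Q' hqQ' ih =>
    have hq0 : 0 < q := hQ q (Finset.mem_insert_self _ _)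
    have hQ' : ∀ r ∈ Q', 0 < r := fun r hr => hQ r (Finset.mem_insert_of_mem hr)
    have hμ0' : ∀ r ∈ Q', ∀ a : ℕ, 0 ≤ μ r a :=
      fun r hr => hμ0 r (Finset.mem_insert_of_mem hr)
    have hμsum' : ∀ r ∈ Q', ∑ a ∈ Finset.range r, μ r a = 1 :=
      fun r hr => hμsum r (Finset.mem_insert_of_mem hr)
    set e : ℕ → ℝ := fun p => Real.exp (-∑ r ∈ Q', μ r (p % r)) with he
    set g : ℕ → ℝ := fun j => ∑ p ∈ R.filter (fun p => p % q ≠ j), e p with hg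
    -- the key averaging identity
    have hkey : ∑ j ∈ Finset.range q, μ q j * g j
        = ∑ p ∈ R, (1 - μ q (p % q)) * e p := by
      have : ∀ j, g j = ∑ p ∈ R, if p % q ≠ j then e p else 0 := by
        intro j; rw [hg]; exact Finset.sum_filter _ _
      simp_rw [this, Finset.mul_sum]
      rw [Finset.sum_comm]
      refine Finset.sum_congr rfl fun p hp => ?_
      have hmem : p % q ∈ Finset.range q := Finset.mem_range.mpr (Nat.mod_lt _ hq0)
      have : ∑ j ∈ Finset.range q, μ q j * (if p % q ≠ j then e p else 0)
          = ∑ j ∈ (Finset.range q).erase (p % q), μ q j * e p := by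
        rw [← Finset.add_sum_erase _ _ hmem, if_neg (by simp), mul_zero, zero_add]
        refine Finset.sum_congr rfl fun j hj => ?_
        rw [if_pos (Ne.symm (Finset.mem_erase.mp hj).1)]
      rw [this, ← Finset.sum_mul, Finset.sum_erase_eq_sub hmem, hμsum q (Finset.mem_insert_self _ _)]
    obtain ⟨aq, haq, hle⟩ := stmt15_exists_le_weighted (Finset.range q)
      ⟨0, Finset.mem_range.mpr hq0⟩ (μ q) g
      (fun j _ => hμ0 q (Finset.mem_insert_self _ _) j)
      (hμsum q (Finset.mem_insert_self _ _))
    obtain ⟨a', ha'⟩ := ih hQ' hμ0' hμsum' (R.filter (fun p => p % q ≠ aq))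
    refine ⟨Function.update a' q aq, ?_⟩
    have haq_lt : aq < q := Finset.mem_range.mp haq
    have hupd : ∀ r ∈ Q', Function.update a' q aq r = a' r := fun r hr =>
      Function.update_of_ne (fun h : r = q => hqQ' (h ▸ hr)) _ _
    have hfilter : R.filter (fun p₀ => ∀ r ∈ insert q Q',
          p₀ % r ≠ Function.update a' q aq r % r)
        = (R.filter (fun p => p % q ≠ aq)).filter
            (fun p₀ => ∀ r ∈ Q', p₀ % r ≠ a' r % r) := by
      rw [Finset.filter_filter]
      refine Finset.filter_congr fun p hp => ?_
      simp only [Finset.forall_mem_insert, Function.update_self,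
        Nat.mod_eq_of_lt haq_lt]
      constructor
      · rintro ⟨h1, h2⟩
        exact ⟨h1, fun r hr => by rw [← hupd r hr]; exact h2 r hr⟩
      · rintro ⟨h1, h2⟩
        exact ⟨h1, fun r hr => by rw [hupd r hr]; exact h2 r hr⟩
    rw [hfilter]
    have step1 : ((((R.filter (fun p => p % q ≠ aq)).filter
        (fun p₀ => ∀ r ∈ Q', p₀ % r ≠ a' r % r)).card : ℝ)) ≤ g aq := by
      exact ha'
    refine step1.trans (hle.trans ?_)
    rw [hkey]
    refine Finset.sum_le_sum fun p hp => ?_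
    have h1 : (1 : ℝ) - μ q (p % q) ≤ Real.exp (-μ q (p % q)) := by
      have := Real.add_one_le_exp (-μ q (p % q)); linarith
    have he_pos : 0 < e p := Real.exp_pos _
    calc (1 - μ q (p % q)) * e p ≤ Real.exp (-μ q (p % q)) * e p :=
          mul_le_mul_of_nonneg_right h1 he_pos.le
      _ = Real.exp (-∑ r ∈ insert q Q', μ r (p % r)) := by
          rw [he, ← Real.exp_add, Finset.sum_insert hqQ', neg_add]

/-- (Probabilistic covering principle.) Let `Q` be a finite set of
primes, `R` a finite set of integers, and for each `q ∈ Q` let `μ_q` be a probability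
mass function on the residues mod `q`. If `∑_{q ∈ Q} μ_q(p₀ mod q) ≥ L` for every
`p₀ ∈ R`, then there is a choice of residues `a_q`, one for each `q ∈ Q`, such that at
most `e^{−L}·|R|` elements of `R` avoid all the chosen classes. -/
theorem stmt15 (Q : Finset ℕ) (hQ : ∀ q ∈ Q, q.Prime) (R : Finset ℕ)
    (μ : ℕ → ℕ → ℝ)
    (hμ01 : ∀ q ∈ Q, ∀ a : ℕ, 0 ≤ μ q a ∧ μ q a ≤ 1)
    (hμsum : ∀ q ∈ Q, ∑ a ∈ Finset.range q, μ q a = 1)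
    (L : ℝ) (hL : 0 ≤ L)
    (hlower : ∀ p₀ ∈ R, L ≤ ∑ q ∈ Q, μ q (p₀ % q)) :
    ∃ a : ℕ → ℕ,
      ((R.filter (fun p₀ : ℕ => ∀ q ∈ Q, p₀ % q ≠ a q % q)).card : ℝ)
        ≤ Real.exp (-L) * (R.card : ℝ) := by
  obtain ⟨a, ha⟩ := stmt15_aux μ Q (fun q hq => (hQ q hq).pos)
    (fun q hq a => (hμ01 q hq a).1) hμsum R
  refine ⟨a, ha.trans ?_⟩
  calc ∑ p ∈ R, Real.exp (-∑ q ∈ Q, μ q (p % q))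
      ≤ ∑ p ∈ R, Real.exp (-L) :=
        Finset.sum_le_sum fun p hp =>
          Real.exp_le_exp.mpr (neg_le_neg (hlower p hp))
    _ = Real.exp (-L) * (R.card : ℝ) := by
        rw [Finset.sum_const, nsmul_eq_mul, mul_comm]
end

section
/- There is an absolute constant κ > 0 such that for every ε ∈ (0,1) and every η > 0 there exists x₀ with the following property: for all x ≥ x₀ and all integers M ≤ κ·x^{1/5} with ω(M) ≤ exp(log₂M·log₄M/log₃M), setting w = log₄x and y = exp((1−ε)·log x·log₃x/log₂x), one has ∑_{w < p ≤ y, p ∣ M} (log p)²/p ≤ η·(log y)/(log x)^{1/2}, where the sum is over primes p dividing M with w < p ≤ y. -/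
set_option maxHeartbeats 800000


open scoped Classical

/-- `y = exp((1−ε)·log x·log₃x/log₂x)`. -/
noncomputable def yy (ε x : ℝ) : ℝ :=
  Real.exp ((1 - ε) * Real.log x * Real.log^[3] x / Real.log^[2] x)

lemma log_le_two_sqrt {t : ℝ} (ht : 1 ≤ t) : Real.log t ≤ 2 * Real.sqrt t := by
  have h0 : 0 < t := lt_of_lt_of_le one_pos ht
  have hs : 0 < Real.sqrt t := Real.sqrt_pos.mpr h0
  have h := Real.log_le_sub_one_of_pos hs
  rw [Real.log_sqrt h0.le] at h
  nlinarith

lemma log_le_quarter {t : ℝ} (ht : 64 ≤ t) : Real.log t ≤ t / 4 := by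
  have h1 : (1:ℝ) ≤ t := by linarith
  have h2 := log_le_two_sqrt h1
  have h3 : (8:ℝ) ≤ Real.sqrt t := by
    have h := Real.sqrt_le_sqrt ht
    rwa [show (64:ℝ) = 8^2 by norm_num, Real.sqrt_sq (by norm_num : (0:ℝ) ≤ 8)] at h
  have h4 : Real.sqrt t ^ 2 = t := Real.sq_sqrt (by linarith)
  nlinarith

lemma iter2 (t : ℝ) : Real.log^[2] t = Real.log (Real.log t) := rfl
lemma iter3 (t : ℝ) : Real.log^[3] t = Real.log (Real.log (Real.log t)) := rfl
lemma iter4 (t : ℝ) : Real.log^[4] t = Real.log (Real.log (Real.log (Real.log t))) := rfl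

/-- With `w = log₄x`: for `M ≤ κ·x^{1/5}` with
`ω(M) ≤ exp(log₂M·log₄M/log₃M)`, one has
`∑_{w < p ≤ y, p ∣ M} (log p)²/p ≤ η·(log y)/(log x)^{1/2}` for large `x`. -/
theorem stmt17 :
    ∃ κ : ℝ, 0 < κ ∧ ∀ ε : ℝ, 0 < ε → ε < 1 → ∀ η : ℝ, 0 < η →
    ∃ x₀ : ℝ, ∀ x : ℝ, x ≥ x₀ →
    ∀ M : ℕ, 1 ≤ M → (M : ℝ) ≤ κ * x ^ ((1 : ℝ) / 5) →
    (M.primeFactors.card : ℝ) ≤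
      Real.exp (Real.log^[2] (M : ℝ) * Real.log^[4] (M : ℝ) / Real.log^[3] (M : ℝ)) →
    (∑ p ∈ M.primeFactors.filter (fun p : ℕ =>
        Real.log^[4] x < (p : ℝ) ∧ (p : ℝ) ≤ yy ε x),
      (Real.log (p : ℝ)) ^ 2 / (p : ℝ))
      ≤ η * Real.log (yy ε x) / (Real.log x) ^ ((1 : ℝ) / 2) := by
  refine ⟨1, one_pos, ?_⟩
  intro ε hε0 hε1 η hη
  have hc : 0 < η * (1 - ε) := mul_pos hη (by linarith)
  set c : ℝ := η * (1 - ε) with hcdef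
  set C : ℝ := 4 * Real.exp (Real.exp (Real.exp 64)) with hCdef
  have hC : 0 < C := by positivity
  set K : ℝ := (C + 4) / c with hKdef
  have hK : 0 < K := by positivity
  -- eventually, K * log t ≤ t ^ (1/4)
  have hlo : Real.log =o[Filter.atTop] fun t : ℝ => t ^ ((1:ℝ)/4) :=
    isLittleO_log_rpow_atTop (by norm_num)
  have h1 : ∀ᶠ t : ℝ in Filter.atTop, K * Real.log t ≤ t ^ ((1:ℝ)/4) := by
    have h2 := hlo.def (show (0:ℝ) < 1/K by positivity)
    filter_upwards [h2, Filter.eventually_ge_atTop (1:ℝ)] with t ht ht1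
    have hlt : 0 ≤ Real.log t := Real.log_nonneg ht1
    have hrt : 0 ≤ t ^ ((1:ℝ)/4) := Real.rpow_nonneg (by linarith) _
    rw [Real.norm_eq_abs, Real.norm_eq_abs, abs_of_nonneg hlt, abs_of_nonneg hrt] at ht
    have h3 := mul_le_mul_of_nonneg_left ht hK.le
    calc K * Real.log t ≤ K * (1/K * t ^ ((1:ℝ)/4)) := h3
      _ = t ^ ((1:ℝ)/4) := by field_simp
  have hx2 : ∀ᶠ x : ℝ in Filter.atTop,
      K * Real.log (Real.log x) ≤ (Real.log x) ^ ((1:ℝ)/4) :=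
    Real.tendsto_log_atTop.eventually h1
  obtain ⟨x₀, hx₀⟩ := Filter.eventually_atTop.mp
    (hx2.and (Filter.eventually_ge_atTop (Real.exp (Real.exp (Real.exp 1)))))
  refine ⟨x₀, fun x hx M hM1 hMx hω => ?_⟩
  obtain ⟨hKx, hxe⟩ := hx₀ x hx
  set L : ℝ := Real.log x with hLdef
  have hxpos : (0:ℝ) < x := lt_of_lt_of_le (Real.exp_pos _) hxe
  have hx1 : (1:ℝ) ≤ x := le_trans (Real.one_le_exp (by positivity)) hxe
  have hL : Real.exp (Real.exp 1) ≤ L := by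
    have := Real.log_le_log (Real.exp_pos _) hxe
    rwa [Real.log_exp] at this
  have hL1 : (1:ℝ) ≤ L := le_trans (Real.one_le_exp (by positivity)) hL
  have hLpos : (0:ℝ) < L := by linarith
  set ℓ : ℝ := Real.log L with hldef
  have hℓ : Real.exp 1 ≤ ℓ := by
    have := Real.log_le_log (Real.exp_pos _) hL
    rwa [Real.log_exp] at this
  have hℓ1 : (1:ℝ) ≤ ℓ := le_trans (Real.one_le_exp (by positivity)) hℓ
  have hℓpos : (0:ℝ) < ℓ := by linarith
  have hlogℓ : (1:ℝ) ≤ Real.log ℓ := by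
    have := Real.log_le_log (Real.exp_pos _) hℓ
    rwa [Real.log_exp] at this
  set A : ℝ := L ^ ((1:ℝ)/4) with hAdef
  have hA1 : (1:ℝ) ≤ A := by
    have := Real.rpow_le_rpow (by norm_num : (0:ℝ) ≤ 1) hL1 (by norm_num : (0:ℝ) ≤ 1/4)
    rwa [Real.one_rpow] at this
  have hApos : (0:ℝ) < A := by linarith
  have hKA : K * ℓ ≤ A := hKx
  have hcK : c * K = C + 4 := by
    rw [hKdef, mul_div_cancel₀ _ hc.ne']
  have hCA : (C + 4) * ℓ ≤ c * A := by
    calc (C + 4) * ℓ = c * (K * ℓ) := by rw [← hcK]; ring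
      _ ≤ c * A := mul_le_mul_of_nonneg_left hKA hc.le
  -- bound each term of the sum by 4
  set S := M.primeFactors.filter (fun p : ℕ =>
        Real.log^[4] x < (p : ℝ) ∧ (p : ℝ) ≤ yy ε x) with hSdef
  have hterm : ∀ p ∈ S, (Real.log (p:ℝ)) ^ 2 / (p:ℝ) ≤ 4 := by
    intro p hp
    have hpP : p.Prime := Nat.prime_of_mem_primeFactors (Finset.mem_filter.mp hp).1
    have hp2 : (2:ℝ) ≤ (p:ℝ) := by exact_mod_cast hpP.two_le
    have hp1 : (1:ℝ) ≤ (p:ℝ) := by linarith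
    have hppos : (0:ℝ) < (p:ℝ) := by linarith
    have h2 := log_le_two_sqrt hp1
    have h4 : Real.sqrt (p:ℝ) ^ 2 = (p:ℝ) := Real.sq_sqrt (by linarith)
    have hlnn : 0 ≤ Real.log (p:ℝ) := Real.log_nonneg hp1
    rw [div_le_iff₀ hppos]
    nlinarith [Real.sqrt_nonneg (p:ℝ)]
  have hsum : (∑ p ∈ S, (Real.log (p:ℝ)) ^ 2 / (p:ℝ)) ≤ (M.primeFactors.card : ℝ) * 4 := by
    calc (∑ p ∈ S, (Real.log (p:ℝ)) ^ 2 / (p:ℝ)) ≤ ∑ _p ∈ S, (4:ℝ) :=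
          Finset.sum_le_sum hterm
      _ = (S.card : ℝ) * 4 := by rw [Finset.sum_const]; push_cast; ring
      _ ≤ (M.primeFactors.card : ℝ) * 4 := by
          have := Finset.card_filter_le M.primeFactors (fun p : ℕ =>
            Real.log^[4] x < (p : ℝ) ∧ (p : ℝ) ≤ yy ε x)
          have h' : (S.card : ℝ) ≤ (M.primeFactors.card : ℝ) := by exact_mod_cast this
          nlinarith
  -- main bound : ω(M) * 4 ≤ C + 4 * A
  have hmain : (M.primeFactors.card : ℝ) * 4 ≤ C + 4 * A := by
    by_cases hM : (M:ℝ) < Real.exp (Real.exp (Real.exp 64))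
    · -- small M : ω(M) ≤ M
      have hsub : M.primeFactors ⊆ Finset.Icc 1 M := by
        intro p hp
        exact Finset.mem_Icc.mpr ⟨(Nat.prime_of_mem_primeFactors hp).pos,
          Nat.le_of_dvd (by omega) (Nat.dvd_of_mem_primeFactors hp)⟩
      have hcard : M.primeFactors.card ≤ M := by
        have := Finset.card_le_card hsub
        simpa [Nat.card_Icc] using this
      have hcard' : (M.primeFactors.card : ℝ) ≤ (M:ℝ) := by exact_mod_cast hcard
      have hAnn : (0:ℝ) ≤ 4 * A := by positivity
      have h2 : (M:ℝ) * 4 ≤ C := by rw [hCdef]; linarith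
      linarith
    · -- large M
      push_neg at hM
      have hM0 : (0:ℝ) < (M:ℝ) := lt_of_lt_of_le (Real.exp_pos _) hM
      have hlogM : Real.exp (Real.exp 64) ≤ Real.log (M:ℝ) := by
        have := Real.log_le_log (Real.exp_pos _) hM
        rwa [Real.log_exp] at this
      have hlogMpos : (0:ℝ) < Real.log (M:ℝ) :=
        lt_of_lt_of_le (Real.exp_pos _) hlogM
      have h2M : Real.exp 64 ≤ Real.log (Real.log (M:ℝ)) := by
        have := Real.log_le_log (Real.exp_pos _) hlogM
        rwa [Real.log_exp] at this
      have h2Mpos : (0:ℝ) < Real.log (Real.log (M:ℝ)) :=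
        lt_of_lt_of_le (Real.exp_pos _) h2M
      have h3M : (64:ℝ) ≤ Real.log (Real.log (Real.log (M:ℝ))) := by
        have := Real.log_le_log (Real.exp_pos _) h2M
        rwa [Real.log_exp] at this
      set a : ℝ := Real.log (Real.log (M:ℝ)) with hadef
      set b : ℝ := Real.log (Real.log (Real.log (M:ℝ))) with hbdef
      set d : ℝ := Real.log b with hddef
      have hbpos : (0:ℝ) < b := by linarith
      have hd : d ≤ b / 4 := log_le_quarter h3M
      have hd0 : (0:ℝ) ≤ d := Real.log_nonneg (by linarith)
      have ha0 : (0:ℝ) ≤ a := h2Mpos.le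
      have hexp : a * d / b ≤ a / 4 := by
        rw [div_le_div_iff₀ hbpos (by norm_num : (0:ℝ) < 4)]
        nlinarith
      -- log M ≤ L hence a ≤ ℓ
      have hMlex : (M:ℝ) ≤ x := by
        have h5 : x ^ ((1:ℝ)/5) ≤ x ^ (1:ℝ) :=
          Real.rpow_le_rpow_of_exponent_le hx1 (by norm_num)
        rw [Real.rpow_one] at h5
        calc (M:ℝ) ≤ 1 * x ^ ((1:ℝ)/5) := hMx
          _ = x ^ ((1:ℝ)/5) := by ring
          _ ≤ x := h5
      have hlogMx : Real.log (M:ℝ) ≤ L := Real.log_le_log hM0 hMlex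
      have haℓ : a ≤ ℓ := Real.log_le_log hlogMpos hlogMx
      -- ω(M) ≤ exp(a/4) ≤ exp(ℓ/4) = A
      have hω' : (M.primeFactors.card : ℝ) ≤ Real.exp (a * d / b) := by
        rw [iter2, iter4, iter3] at hω
        exact hω
      have hωA : (M.primeFactors.card : ℝ) ≤ A := by
        have hAeq : A = Real.exp (ℓ / 4) := by
          rw [hAdef, Real.rpow_def_of_pos hLpos]
          congr 1
          rw [← hldef]; ring
        calc (M.primeFactors.card : ℝ) ≤ Real.exp (a * d / b) := hω'
          _ ≤ Real.exp (a / 4) := Real.exp_le_exp.mpr hexp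
          _ ≤ Real.exp (ℓ / 4) := Real.exp_le_exp.mpr (by linarith)
          _ = A := hAeq.symm
      linarith
  -- conclude
  have hA4 : A ^ (4:ℕ) = L := by
    rw [hAdef, ← Real.rpow_natCast (L ^ ((1:ℝ)/4)) 4, ← Real.rpow_mul hLpos.le]
    norm_num
  have hA2 : L ^ ((1:ℝ)/2) = A ^ (2:ℕ) := by
    rw [hAdef, ← Real.rpow_natCast (L ^ ((1:ℝ)/4)) 2, ← Real.rpow_mul hLpos.le]
    norm_num
  have hfinal : C + 4 * A ≤ η * Real.log (yy ε x) / (Real.log x) ^ ((1:ℝ)/2) := by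
    rw [yy, Real.log_exp, iter3, iter2, ← hLdef, ← hldef]
    calc C + 4 * A ≤ c * A ^ (4:ℕ) * Real.log ℓ / (ℓ * A ^ (2:ℕ)) := by
          rw [le_div_iff₀ (by positivity)]
          nlinarith [mul_le_mul_of_nonneg_right hCA (by positivity : (0:ℝ) ≤ A^3),
            mul_le_mul_of_nonneg_left hlogℓ (by positivity : (0:ℝ) ≤ c * A^4),
            mul_le_mul_of_nonneg_left hA1 (by positivity : (0:ℝ) ≤ C * ℓ * A^2)]
      _ = η * ((1 - ε) * L * Real.log ℓ / ℓ) / L ^ ((1:ℝ)/2) := by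
          rw [hA2, ← hA4, hcdef]
          field_simp
  calc (∑ p ∈ S, (Real.log (p:ℝ)) ^ 2 / (p:ℝ)) ≤ (M.primeFactors.card : ℝ) * 4 := hsum
    _ ≤ C + 4 * A := hmain
    _ ≤ η * Real.log (yy ε x) / (Real.log x) ^ ((1:ℝ)/2) := hfinal
end
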